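/- Let S be a bounded selfadjoint operator on a complex Hilbert space K with Sp(S) ⊆ [r, R], r < R, and f : [r, R] → ℝ continuous convex with finite one-sided derivatives f′₊(r), f′₋(R). Then for every unit vector x ∈ K, 0 ≤ ⟨f(S) x, x⟩ − f(⟨S x, x⟩) ≤ (1/4)(R − r)[f′₋(R) − f′₊(r)]. -/

import Mathlib

open scoped InnerProductSpace
open Filter Topology

section Helpers

variable {K : Type*} [NormedAddCommGroup K] [InnerProductSpace ℂ K] [CompleteSpace K]

lemma my_inner_mono (A B : K →L[ℂ] K) (h : A ≤ B) (x : K) :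
    (⟪A x, x⟫_ℂ).re ≤ (⟪B x, x⟫_ℂ).re := by
  have h2 := ((ContinuousLinearMap.le_def A B).mp h).inner_nonneg_left x
  rw [ContinuousLinearMap.sub_apply, inner_sub_left] at h2
  have h2 := (Complex.le_def.mp h2).1
  simp only [Complex.zero_re, Complex.sub_re] at h2
  linarith

lemma my_affine_inner (S : K →L[ℂ] K) (hS : IsSelfAdjoint S) (x : K) (hx : ‖x‖ = 1)
    (a c : ℝ) :
    (⟪(cfc (fun t : ℝ => a + c * t) S) x, x⟫_ℂ).re = a + c * (⟪S x, x⟫_ℂ).re := by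
  have h1 : cfc (fun t : ℝ => a + c * t) S = algebraMap ℝ _ a + c • S := by
    rw [cfc_add S (fun _ => a) (fun t => c * t) (by fun_prop) (by fun_prop),
      cfc_const a S hS, cfc_const_mul_id c S hS]
  have hxx : (⟪x, x⟫_ℂ).re = 1 := by
    have := @inner_self_eq_norm_sq ℂ _ _ _ _ x
    simp only [RCLike.re_to_complex] at this
    rw [this, hx]; norm_num
  rw [h1]
  rw [ContinuousLinearMap.add_apply, ContinuousLinearMap.smul_apply,
    Algebra.algebraMap_eq_smul_one, ContinuousLinearMap.smul_apply,
    ContinuousLinearMap.one_apply, inner_add_left]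
  have e1 : (⟪a • x, x⟫_ℂ) = (a : ℂ) * ⟪x, x⟫_ℂ := by
    rw [show a • x = (a : ℂ) • x by simp, inner_smul_left]; simp
  have e2 : (⟪c • S x, x⟫_ℂ) = (c : ℂ) * ⟪S x, x⟫_ℂ := by
    rw [show c • S x = (c : ℂ) • S x by simp, inner_smul_left]; simp
  rw [e1, e2]
  simp [hxx, hx]

lemma my_alg_inner (x : K) (hx : ‖x‖ = 1) (a : ℝ) :
    (⟪(algebraMap ℝ (K →L[ℂ] K) a) x, x⟫_ℂ).re = a := by
  have hxx : (⟪x, x⟫_ℂ).re = 1 := by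
    have := @inner_self_eq_norm_sq ℂ _ _ _ _ x
    simp only [RCLike.re_to_complex] at this
    rw [this, hx]; norm_num
  rw [Algebra.algebraMap_eq_smul_one, ContinuousLinearMap.smul_apply,
    ContinuousLinearMap.one_apply]
  have e1 : (⟪a • x, x⟫_ℂ) = (a : ℂ) * ⟪x, x⟫_ℂ := by
    rw [show a • x = (a : ℂ) • x by simp, inner_smul_left]; simp
  rw [e1]
  simp [hxx, hx]

end Helpers

lemma my_slope_r {r R : ℝ} (hrR : r < R) {f : ℝ → ℝ}
    (hf : ConvexOn ℝ (Set.Icc r R) f) {dr : ℝ}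
    (hdr : HasDerivWithinAt f dr (Set.Ioi r) r) :
    ∀ t ∈ Set.Ioc r R, dr ≤ slope f r t := by
  intro t ht
  have h := hasDerivWithinAt_iff_tendsto_slope.mp hdr
  rw [Set.diff_singleton_eq_self Set.notMem_Ioi_self] at h
  refine le_of_tendsto h ?_
  have h1 : ∀ᶠ u in 𝓝[Set.Ioi r] r, u < t :=
    eventually_nhdsWithin_of_eventually_nhds (eventually_lt_nhds ht.1)
  filter_upwards [h1, self_mem_nhdsWithin] with u hu1 hu2
  exact hf.slope_mono ⟨le_refl r, hrR.le⟩
    ⟨Set.mem_Icc.mpr ⟨le_of_lt hu2, le_of_lt (hu1.trans_le ht.2)⟩,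
    ne_of_gt hu2⟩ ⟨Set.mem_Icc.mpr ⟨ht.1.le, ht.2⟩, ne_of_gt ht.1⟩ hu1.le

lemma my_slope_R {r R : ℝ} (hrR : r < R) {f : ℝ → ℝ}
    (hf : ConvexOn ℝ (Set.Icc r R) f) {dR : ℝ}
    (hdR : HasDerivWithinAt f dR (Set.Iio R) R) :
    ∀ t ∈ Set.Ico r R, slope f R t ≤ dR := by
  intro t ht
  have h := hasDerivWithinAt_iff_tendsto_slope.mp hdR
  rw [Set.diff_singleton_eq_self Set.notMem_Iio_self] at h
  refine ge_of_tendsto h ?_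
  have h1 : ∀ᶠ u in 𝓝[Set.Iio R] R, t < u :=
    eventually_nhdsWithin_of_eventually_nhds (eventually_gt_nhds ht.2)
  filter_upwards [h1, self_mem_nhdsWithin] with u hu1 hu2
  exact hf.slope_mono ⟨hrR.le, le_refl R⟩ ⟨Set.mem_Icc.mpr ⟨ht.1, ht.2.le⟩, ne_of_lt ht.2⟩
    ⟨Set.mem_Icc.mpr ⟨ht.1.trans hu1.le, hu2.le⟩, ne_of_lt hu2⟩ hu1.le

lemma my_support_line {r R : ℝ} (hrR : r < R) {f : ℝ → ℝ}
    (hf : ConvexOn ℝ (Set.Icc r R) f) {dr dR : ℝ}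
    (hdr : HasDerivWithinAt f dr (Set.Ioi r) r)
    (hdR : HasDerivWithinAt f dR (Set.Iio R) R)
    {m : ℝ} (hm : m ∈ Set.Icc r R) :
    ∃ c : ℝ, ∀ t ∈ Set.Icc r R, f m + c * (t - m) ≤ f t := by
  have hrmem : r ∈ Set.Icc r R := ⟨le_refl r, hrR.le⟩
  have hRmem : R ∈ Set.Icc r R := ⟨hrR.le, le_refl R⟩
  have hslope_r := my_slope_r hrR hf hdr
  have hslope_R := my_slope_R hrR hf hdR
  rcases eq_or_lt_of_le hm.1 with hmr | hmr
  · -- m = r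
    subst hmr
    refine ⟨dr, fun t ht => ?_⟩
    rcases eq_or_lt_of_le ht.1 with htr | htr
    · simp [← htr]
    · have := hslope_r t ⟨htr, ht.2⟩
      rw [slope_def_field] at this
      rw [le_div_iff₀ (by linarith : (0:ℝ) < t - r)] at this
      nlinarith [this]
  rcases eq_or_lt_of_le hm.2 with hmR | hmR
  · -- m = R
    subst hmR
    refine ⟨dR, fun t ht => ?_⟩
    rcases eq_or_lt_of_le ht.2 with htR | htR
    · simp [htR]
    · have := hslope_R t ⟨ht.1, htR⟩
      rw [slope_def_field] at this
      rw [div_le_iff_of_neg (by linarith : t - m < 0)] at this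
      nlinarith [this]
  · -- r < m < R
    have hmmem : m ∈ Set.Icc r R := hm
    set c := sSup ((slope f m) '' Set.Ico r m) with hc
    have hne : ((slope f m) '' Set.Ico r m).Nonempty :=
      ⟨slope f m r, Set.mem_image_of_mem _ ⟨le_refl r, hmr⟩⟩
    have hbdd : BddAbove ((slope f m) '' Set.Ico r m) := by
      refine ⟨slope f m R, ?_⟩
      rintro _ ⟨u, hu, rfl⟩
      exact hf.slope_mono hmmem ⟨Set.mem_Icc.mpr ⟨hu.1, (hu.2.trans hmR).le⟩, ne_of_lt hu.2⟩
        ⟨hRmem, ne_of_gt hmR⟩ ((hu.2.trans hmR).le)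
    refine ⟨c, fun t ht => ?_⟩
    rcases lt_trichotomy t m with htm | htm | htm
    · have h1 : slope f m t ≤ c :=
        le_csSup hbdd (Set.mem_image_of_mem _ ⟨ht.1, htm⟩)
      rw [slope_def_field] at h1
      rw [div_le_iff_of_neg (by linarith : t - m < 0)] at h1
      linarith
    · simp [htm]
    · have h1 : c ≤ slope f m t := by
        refine csSup_le hne ?_
        rintro _ ⟨u, hu, rfl⟩
        exact hf.slope_mono hmmem ⟨Set.mem_Icc.mpr ⟨hu.1, (hu.2.trans hmR).le⟩, ne_of_lt hu.2⟩
          ⟨ht, ne_of_gt htm⟩ (hu.2.le.trans htm.le)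
      rw [slope_def_field] at h1
      rw [le_div_iff₀ (by linarith : (0:ℝ) < t - m)] at h1
      linarith

theorem cfc_jensen_defect_quarter_bound
    {K : Type*} [NormedAddCommGroup K] [InnerProductSpace ℂ K] [CompleteSpace K]
    (S : K →L[ℂ] K) (hS : IsSelfAdjoint S) (r R : ℝ) (hrR : r < R)
    (hspec : spectrum ℝ S ⊆ Set.Icc r R)
    (f : ℝ → ℝ) (hfc : ContinuousOn f (Set.Icc r R))
    (hf : ConvexOn ℝ (Set.Icc r R) f) (dr dR : ℝ)
    (hdr : HasDerivWithinAt f dr (Set.Ioi r) r)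
    (hdR : HasDerivWithinAt f dR (Set.Iio R) R)
    (x : K) (hx : ‖x‖ = 1) :
    0 ≤ (⟪(cfc f S) x, x⟫_ℂ).re - f ((⟪S x, x⟫_ℂ).re) ∧
    (⟪(cfc f S) x, x⟫_ℂ).re - f ((⟪S x, x⟫_ℂ).re) ≤
      (1 / 4) * (R - r) * (dR - dr) := by
  set m := (⟪S x, x⟫_ℂ).re with hm
  -- m ∈ [r, R]
  have hmem : m ∈ Set.Icc r R := by
    constructor
    · have h2 : algebraMap ℝ (K →L[ℂ] K) r ≤ S :=
        algebraMap_le_of_le_spectrum (fun t ht => (hspec ht).1) hS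
      have := my_inner_mono _ _ h2 x
      rwa [my_alg_inner x hx r] at this
    · have h1 : S ≤ algebraMap ℝ (K →L[ℂ] K) R :=
        le_algebraMap_of_spectrum_le (fun t ht => (hspec ht).2) hS
      have := my_inner_mono _ _ h1 x
      rwa [my_alg_inner x hx R] at this
  have hfc' : ContinuousOn f (spectrum ℝ S) := hfc.mono hspec
  -- lower bound
  obtain ⟨c, hc⟩ := my_support_line hrR hf hdr hdR hmem
  have hlow : f m ≤ (⟪(cfc f S) x, x⟫_ℂ).re := by
    have hle : cfc (fun t : ℝ => (f m - c * m) + c * t) S ≤ cfc f S := by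
      refine cfc_mono (fun t ht => ?_) (by fun_prop) hfc'
      have := hc t (hspec ht)
      linarith
    have := my_inner_mono _ _ hle x
    rw [my_affine_inner S hS x hx (f m - c * m) c] at this
    linarith
  -- chord upper bound
  have hAB : ∀ t ∈ Set.Icc r R,
      f t ≤ (R * f r - r * f R) / (R - r) + ((f R - f r) / (R - r)) * t := by
    intro t ht
    have h0 : R - r ≠ 0 := by linarith
    have ha : (0:ℝ) ≤ (R - t) / (R - r) := by
      apply div_nonneg <;> linarith [ht.2]
    have hb : (0:ℝ) ≤ (t - r) / (R - r) := by
      apply div_nonneg <;> linarith [ht.1]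
    have hab : (R - t) / (R - r) + (t - r) / (R - r) = 1 := by
      rw [← add_div, show R - t + (t - r) = R - r by ring,
        div_self (by linarith : R - r ≠ 0)]
    have hcomb := hf.2 (Set.mem_Icc.mpr ⟨le_refl r, hrR.le⟩)
      (Set.mem_Icc.mpr ⟨hrR.le, le_refl R⟩) ha hb hab
    have hpt : ((R - t) / (R - r)) • r + ((t - r) / (R - r)) • R = t := by
      simp only [smul_eq_mul]
      rw [div_mul_eq_mul_div, div_mul_eq_mul_div, ← add_div,
        show (R - t) * r + (t - r) * R = t * (R - r) by ring,
        mul_div_assoc, div_self h0, mul_one]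
    rw [hpt] at hcomb
    have hRr : (0:ℝ) < R - r := by linarith
    calc f t ≤ ((R - t) / (R - r)) • f r + ((t - r) / (R - r)) • f R := hcomb
      _ = (R * f r - r * f R) / (R - r) + ((f R - f r) / (R - r)) * t := by
          simp only [smul_eq_mul]
          field_simp
          ring
  have hup : (⟪(cfc f S) x, x⟫_ℂ).re ≤
      (R * f r - r * f R) / (R - r) + ((f R - f r) / (R - r)) * m := by
    have hle : cfc f S ≤
        cfc (fun t : ℝ => (R * f r - r * f R) / (R - r) + ((f R - f r) / (R - r)) * t) S :=
      cfc_mono (fun t ht => hAB t (hspec ht)) hfc' (by fun_prop)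
    have := my_inner_mono _ _ hle x
    rw [my_affine_inner S hS x hx ((R * f r - r * f R) / (R - r)) ((f R - f r) / (R - r))] at this
    exact this
  refine ⟨by linarith, ?_⟩
  -- scalar estimate
  have hRr : (0:ℝ) < R - r := by linarith
  have h0 : R - r ≠ 0 := by linarith
  have h1 : dr * (m - r) ≤ f m - f r := by
    rcases eq_or_lt_of_le hmem.1 with h | h
    · rw [← h]; simp
    · have := my_slope_r hrR hf hdr m ⟨h, hmem.2⟩
      rw [slope_def_field, le_div_iff₀ (by linarith : (0:ℝ) < m - r)] at this
      linarith
  have h2 : f R - f m ≤ dR * (R - m) := by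
    rcases eq_or_lt_of_le hmem.2 with h | h
    · rw [h]; simp
    · have := my_slope_R hrR hf hdR m ⟨hmem.1, h⟩
      rw [slope_def_field, div_le_iff_of_neg (by linarith : m - R < 0)] at this
      nlinarith
  have hdd : 0 ≤ dR - dr := by
    have ha := my_slope_r hrR hf hdr R ⟨hrR, le_refl R⟩
    have hb := my_slope_R hrR hf hdR r ⟨le_refl r, hrR⟩
    rw [slope_def_field] at ha hb
    have : (f r - f R) / (r - R) = (f R - f r) / (R - r) := by
      rw [div_eq_div_iff (by linarith) h0]; ring
    rw [this] at hb
    linarith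
  have hq : 4 * ((m - r) * (R - m)) ≤ (R - r) ^ 2 := by nlinarith [sq_nonneg (R + r - 2 * m)]
  have key : (R * f r - r * f R) / (R - r) + ((f R - f r) / (R - r)) * m - f m ≤
      (1 / 4) * (R - r) * (dR - dr) := by
    rw [div_mul_eq_mul_div, ← add_div, sub_le_iff_le_add]
    rw [div_le_iff₀ hRr]
    have p1 : (R - m) * (dr * (m - r)) ≤ (R - m) * (f m - f r) :=
      mul_le_mul_of_nonneg_left h1 (by linarith [hmem.2])
    have p2 : (m - r) * (f R - f m) ≤ (m - r) * (dR * (R - m)) :=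
      mul_le_mul_of_nonneg_left h2 (by linarith [hmem.1])
    have p3 : 4 * ((m - r) * (R - m)) * (dR - dr) ≤ (R - r) ^ 2 * (dR - dr) :=
      mul_le_mul_of_nonneg_right hq hdd
    nlinarith [p1, p2, p3]
  linarith
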